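/- Let r, β > 0 and L2 > e^{2r}. If (L2 + e^{2r−β} + 1)/(e^{r−β} + e^r + e^{−r}) ≤ L1 < (L2 + e^{2r−β})/(e^{r−β} + e^r), then (L1 − e^r)²(e^{2r−β} + 1)/(e^β − 1) + (L2 − L1 e^r)²/(e^β − 1) < (M − e^r)²(e^{2r−β} + 1)/(e^β − 1) + (L2 − M e^r)²/(e^β − 1), where M = (L2 + e^{2r−β})/(e^{r−β} + e^r). -/

import Mathlib

open Real

theorem stmt_5 (r β L1 L2 : ℝ) (hr : 0 < r) (hβ : 0 < β)
    (hL2 : L2 > exp (2 * r))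
    (hmean1 : L2 > L1 * exp r) (hmean2 : L1 * exp r > exp (2 * r))
    (hlow : (L2 + exp (2 * r - β) + 1) / (exp (r - β) + exp r + exp (-r)) ≤ L1)
    (hhigh : L1 < (L2 + exp (2 * r - β)) / (exp (r - β) + exp r)) :
    (L1 - exp r) ^ 2 * (exp (2 * r - β) + 1) / (exp β - 1)
      + (L2 - L1 * exp r) ^ 2 / (exp β - 1)
    < ((L2 + exp (2 * r - β)) / (exp (r - β) + exp r) - exp r) ^ 2
        * (exp (2 * r - β) + 1) / (exp β - 1)
      + (L2 - ((L2 + exp (2 * r - β)) / (exp (r - β) + exp r)) * exp r) ^ 2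
        / (exp β - 1) := by
  set a := exp r with ha
  set b := exp β with hb
  have ha1 : 1 < a := one_lt_exp_iff.2 hr
  have hb1 : 1 < b := one_lt_exp_iff.2 hβ
  have ha0 : 0 < a := by linarith
  have hb0 : 0 < b := by linarith
  have e1 : exp (2 * r) = a ^ 2 := by rw [two_mul, exp_add, ha, sq]
  have e2 : exp (2 * r - β) = a ^ 2 / b := by rw [exp_sub, e1, hb]
  have e3 : exp (r - β) = a / b := by rw [exp_sub, ha, hb]
  have e4 : exp (-r) = 1 / a := by rw [exp_neg, ha, one_div]
  rw [e1] at hL2 hmean2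
  rw [e2, e3, e4] at hlow
  rw [e2, e3] at hhigh
  rw [e2, e3]
  -- abbreviations
  have hd : 0 < a / b + a := by positivity
  have hden : 0 < a / b + a + 1 / a := by positivity
  set M := (L2 + a ^ 2 / b) / (a / b + a) with hM
  -- L1 < M
  have hL1M : L1 < M := hhigh
  -- vertex inequality: L1 * (A + a^2) ≥ a * (L2 + A), A = a^2/b + 1
  have hx : a * (L2 + (a ^ 2 / b + 1)) ≤ L1 * ((a ^ 2 / b + 1) + a ^ 2) := by
    have h0 : L2 + a ^ 2 / b + 1 ≤ L1 * (a / b + a + 1 / a) :=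
      (div_le_iff₀ hden).mp hlow
    have h1 := mul_le_mul_of_nonneg_left h0 ha0.le
    have ha' : a ≠ 0 := ne_of_gt ha0
    have hb' : b ≠ 0 := ne_of_gt hb0
    calc a * (L2 + (a ^ 2 / b + 1)) = a * (L2 + a ^ 2 / b + 1) := by ring
      _ ≤ a * (L1 * (a / b + a + 1 / a)) := h1
      _ = L1 * ((a ^ 2 / b + 1) + a ^ 2) := by field_simp; ring
  have hMx : a * (L2 + (a ^ 2 / b + 1)) < M * ((a ^ 2 / b + 1) + a ^ 2) := by
    have hApos : 0 < (a ^ 2 / b + 1) + a ^ 2 := by positivity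
    calc a * (L2 + (a ^ 2 / b + 1)) ≤ L1 * ((a ^ 2 / b + 1) + a ^ 2) := hx
      _ < M * ((a ^ 2 / b + 1) + a ^ 2) := by
          exact mul_lt_mul_of_pos_right hL1M hApos
  -- reduce the goal: common positive denominator b - 1
  have hbm1 : 0 < b - 1 := by linarith
  rw [← add_div, ← add_div, div_lt_div_iff_of_pos_right hbm1]
  -- key factorization
  nlinarith [mul_pos (sub_pos.2 hL1M)
    (by nlinarith : (0:ℝ) < ((a ^ 2 / b + 1) + a ^ 2) * (M + L1) - 2 * a * (L2 + (a ^ 2 / b + 1)))]
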